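/- Let f(z) = ((λe^{az+b} − 1)/(e^{az+b} − 1))^n with n ≥ 2, a ≠ 0, λ^n = 1, λ ≠ 1. Then at each pole z₀ of f (i.e., where e^{az₀+b} = 1), the residue of f is zero. -/

import Mathlib

open Complex Metric Real Finset

lemma circleIntegral_finset_sum {ι : Type*} (s : Finset ι) (f : ι → ℂ → ℂ) (c : ℂ) (R : ℝ)
    (h : ∀ i ∈ s, CircleIntegrable (f i) c R) :
    (∮ z in C(c, R), ∑ i ∈ s, f i z) = ∑ i ∈ s, ∮ z in C(c, R), f i z := by
  simp only [circleIntegral, smul_sum]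
  rw [intervalIntegral.integral_finset_sum]
  intro i hi
  exact (h i hi).out

lemma sphere_ne (r : ℝ) (hr0 : 0 < r) (hr1 : r < 1) {z : ℂ} (hz : z ∈ sphere (0:ℂ) r) :
    z ≠ 0 ∧ 1 + z ≠ 0 := by
  have habs : ‖z‖ = r := by simpa [Complex.dist_eq] using hz
  constructor
  · intro h; rw [h] at habs; simp at habs; linarith
  · intro h
    have : z = -1 := by linear_combination h
    rw [this] at habs; simp at habs; linarith

lemma integrable_aux (r : ℝ) (hr0 : 0 < r) (hr1 : r < 1) (k : ℕ) :
    CircleIntegrable (fun z : ℂ => (z ^ k)⁻¹ * (1 + z)⁻¹) 0 r := by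
  refine ContinuousOn.circleIntegrable hr0.le ?_
  exact ((continuousOn_id.pow k).inv₀ (fun w hw => pow_ne_zero _ (sphere_ne r hr0 hr1 hw).1)).mul
    ((continuousOn_const.add continuousOn_id).inv₀ (fun w hw => (sphere_ne r hr0 hr1 hw).2))

lemma zpow_integral (r : ℝ) (hr0 : 0 < r) (k : ℕ) :
    (∮ z in C(0, r), (z ^ (k+1))⁻¹) = if k = 0 then (2 * π * I) else 0 := by
  have hcongr : Set.EqOn (fun z : ℂ => (z ^ (k+1))⁻¹)
      (fun z : ℂ => (z - 0) ^ (-((k:ℤ)+1))) (sphere 0 r) := by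
    intro z _
    simp only [sub_zero]
    rw [show (-((k:ℤ)+1)) = -(((k+1 : ℕ)) : ℤ) by push_cast; ring, zpow_neg, zpow_natCast]
  rw [circleIntegral.integral_congr hr0.le hcongr]
  rcases Nat.eq_zero_or_pos k with rfl | hk
  · rw [if_pos rfl]
    have h2 := circleIntegral.integral_sub_inv_of_mem_ball (c := (0:ℂ)) (w := 0) (R := r)
      (by simpa using hr0)
    rw [← h2]
    refine circleIntegral.integral_congr hr0.le fun z _ => ?_
    norm_num
  · rw [if_neg hk.ne', circleIntegral.integral_sub_zpow_of_ne (by omega) 0 0 r]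

lemma Jk (r : ℝ) (hr0 : 0 < r) (hr1 : r < 1) (k : ℕ) :
    (∮ z in C(0, r), (z ^ k)⁻¹ * (1 + z)⁻¹) =
      if k = 0 then 0 else (-1 : ℂ) ^ (k - 1) * (2 * π * I) := by
  induction k with
  | zero =>
    simp only [pow_zero, inv_one, one_mul, if_pos rfl]
    have hne : ∀ z : ℂ, ‖z‖ ≤ r → (1 : ℂ) + z ≠ 0 := by
      intro z hz h
      have : z = -1 := by linear_combination h
      rw [this] at hz; simp at hz; linarith
    refine circleIntegral_eq_zero_of_differentiable_on_off_countable hr0.le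
      Set.countable_empty ?_ ?_
    · refine DifferentiableOn.continuousOn (𝕜 := ℂ) (fun z hz => DifferentiableAt.differentiableWithinAt ?_)
      have h1 := hne z (by simpa [Complex.dist_eq] using hz)
      exact DifferentiableAt.inv (differentiableAt_id.const_add 1) h1
    · intro z hz
      have h1 := hne z (le_of_lt (by simpa [Complex.dist_eq] using hz.1))
      exact DifferentiableAt.inv (differentiableAt_id.const_add 1) h1
  | succ k ih =>
    have hsplit : Set.EqOn (fun z : ℂ => (z ^ (k+1))⁻¹ * (1 + z)⁻¹)
        (fun z : ℂ => (z ^ (k+1))⁻¹ - (z ^ k)⁻¹ * (1 + z)⁻¹) (sphere 0 r) := by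
      intro z hz
      obtain ⟨h0, h1⟩ := sphere_ne r hr0 hr1 hz
      field_simp
      ring
    rw [circleIntegral.integral_congr hr0.le hsplit,
      circleIntegral.integral_sub ?_ (integrable_aux r hr0 hr1 k),
      zpow_integral r hr0 k, ih]
    · rcases Nat.eq_zero_or_pos k with rfl | hk
      · simp
      · rw [if_neg hk.ne', if_neg hk.ne', if_neg (Nat.succ_ne_zero k), zero_sub]
        have h1 : k + 1 - 1 = (k - 1) + 1 := by omega
        rw [h1, pow_succ]
        ring
    · exact ContinuousOn.circleIntegrable hr0.le <| (continuousOn_id.pow (k+1)).inv₀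
        (fun w hw => pow_ne_zero _ (sphere_ne r hr0 hr1 hw).1)

lemma CircleIntegrable.const_mul' {f : ℂ → ℂ} {c : ℂ} {R : ℝ} (hf : CircleIntegrable f c R)
    (a : ℂ) : CircleIntegrable (fun z => a * f z) c R := IntervalIntegrable.const_mul hf a

set_option maxHeartbeats 800000 in
theorem residue_vanishes_of_pow_eq (n : ℕ) (hn : 2 ≤ n) (D E : ℂ) (h : D ^ n = E ^ n)
    (r : ℝ) (hr0 : 0 < r) (hr1 : r < 1) :
    (∮ z in C(0, r), (D + (D - E) / z) ^ n / (1 + z)) = 0 := by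
  set u : ℂ := D - E with hu
  have hexp : Set.EqOn (fun z : ℂ => (D + u / z) ^ n / (1 + z))
      (fun z : ℂ => ∑ k ∈ range (n+1),
        (D ^ k * u ^ (n - k) * (n.choose k : ℂ)) * ((z ^ (n-k))⁻¹ * (1 + z)⁻¹)) (sphere 0 r) := by
    intro z hz
    obtain ⟨h0, h1⟩ := sphere_ne r hr0 hr1 hz
    simp only [div_eq_mul_inv]
    rw [add_pow, Finset.sum_mul]
    refine Finset.sum_congr rfl fun k _ => ?_
    rw [mul_pow, inv_pow]
    ring
  have hsum := circleIntegral_finset_sum (range (n+1))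
    (fun k z => (D ^ k * u ^ (n - k) * (n.choose k : ℂ)) * ((z ^ (n-k))⁻¹ * (1 + z)⁻¹)) 0 r
    (fun k _ => (integrable_aux r hr0 hr1 (n-k)).const_mul' _)
  rw [circleIntegral.integral_congr hr0.le hexp, hsum]
  have hJ : ∀ k ∈ range (n+1),
      (∮ z in C(0, r), (D ^ k * u ^ (n - k) * (n.choose k : ℂ)) * ((z ^ (n-k))⁻¹ * (1 + z)⁻¹))
      = (D ^ k * u ^ (n - k) * (n.choose k : ℂ)) *
        (if n - k = 0 then 0 else (-1 : ℂ) ^ (n - k - 1) * (2 * π * I)) := by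
    intro k _
    have := circleIntegral.integral_smul (𝕜 := ℂ) (D ^ k * u ^ (n - k) * (n.choose k : ℂ))
      (fun z => (z ^ (n-k))⁻¹ * (1 + z)⁻¹) 0 r
    simp only [smul_eq_mul] at this
    rw [this, Jk r hr0 hr1 (n-k)]
  rw [Finset.sum_congr rfl hJ]
  -- split each term
  have hstep : ∀ k ∈ range (n+1),
      (D ^ k * u ^ (n - k) * (n.choose k : ℂ)) *
        (if n - k = 0 then 0 else (-1 : ℂ) ^ (n - k - 1) * (2 * π * I))
      = -(2 * π * I) * (D ^ k * (-u) ^ (n - k) * (n.choose k : ℂ))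
        + (if k = n then (D ^ k * u ^ (n - k) * (n.choose k : ℂ)) * (2 * π * I) else 0) := by
    intro k hk
    have hkn : k ≤ n := by simpa [Nat.lt_succ_iff] using Finset.mem_range.mp hk
    rcases eq_or_lt_of_le hkn with rfl | hlt
    · simp
      ring
    · have h1 : n - k ≠ 0 := by omega
      obtain ⟨j, hj⟩ : ∃ j, n - k = j + 1 := ⟨n - k - 1, by omega⟩
      rw [if_neg h1, if_neg (by omega : ¬ k = n), hj]
      have : (-u) ^ (j+1) = (-1:ℂ)^(j+1) * u ^ (j+1) := by rw [neg_pow]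
      rw [this]
      simp only [Nat.add_sub_cancel, pow_succ]
      ring
  rw [Finset.sum_congr rfl hstep, Finset.sum_add_distrib, Finset.sum_ite_eq' (range (n+1)) n]
  rw [← Finset.mul_sum, ← add_pow]
  have hDu : D + -u = E := by rw [hu]; ring
  rw [hDu, if_pos (Finset.self_mem_range_succ n)]
  simp only [Nat.choose_self, Nat.cast_one, Nat.sub_self, pow_zero, mul_one, h]
  ring
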